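/- Let S and T be semirings and let f : S → T be a surjective semiring homomorphism. If S is a left CP-semiring, then T is a left CP-semiring. -/
import Mathlib


universe u

/-- A left CP-semiring: every cyclic left `S`-semimodule is projective. -/
def IsLeftCPSemiring (S : Type u) [Semiring S] : Prop :=
  ∀ (M : Type u) [AddCommMonoid M] [Module S M],
    (∃ m : M, Submodule.span S {m} = ⊤) → Module.Projective S M

/-- a surjective homomorphic image of a left CP-semiring is a
left CP-semiring. -/
theorem homomorphicImage_isLeftCPSemiring
    {S : Type u} {T : Type u} [Semiring S] [Semiring T]
    (f : S →+* T) (hf : Function.Surjective f)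
    (hS : IsLeftCPSemiring S) : IsLeftCPSemiring T := by
  intro M _ _ ⟨m, hm⟩
  letI : Module S M := Module.compHom M f
  have hsmul : ∀ (s : S) (x : M), s • x = f s • x := fun s x => rfl
  -- M is cyclic over S
  have hmS : Submodule.span S {m} = ⊤ := by
    rw [Submodule.eq_top_iff']
    intro x
    have hx : x ∈ Submodule.span T {m} := hm ▸ Submodule.mem_top
    obtain ⟨t, rfl⟩ := Submodule.mem_span_singleton.mp hx
    obtain ⟨s, rfl⟩ := hf t
    exact Submodule.mem_span_singleton.mpr ⟨s, (hsmul s m).symm⟩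
  haveI hproj : Module.Projective S M := hS M ⟨m, hmS⟩
  -- the S-linear surjection S → M
  let π' : S →ₗ[S] M := LinearMap.toSpanSingleton S M m
  have hπ' : Function.Surjective π' := by
    intro x
    have hx : x ∈ Submodule.span S {m} := hmS ▸ Submodule.mem_top
    obtain ⟨s, rfl⟩ := Submodule.mem_span_singleton.mp hx
    exact ⟨s, rfl⟩
  obtain ⟨g, hg⟩ := Module.projective_lifting_property π' LinearMap.id hπ'
  -- the T-linear section M → T
  let σ : M →ₗ[T] T :=
    { toFun := fun x => f (g x)
      map_add' := fun x y => by simp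
      map_smul' := fun t x => by
        obtain ⟨s, rfl⟩ := hf t
        have : f s • x = s • x := (hsmul s x).symm
        simp only [this, map_smul, smul_eq_mul, map_mul, RingHom.id_apply] }
  refine Module.Projective.of_split σ (LinearMap.toSpanSingleton T M m) ?_
  ext x
  have := LinearMap.congr_fun hg x
  simpa [σ, LinearMap.toSpanSingleton, π', hsmul] using this
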